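/- On the constraint set (Ω,γ) = 0, the functions F₁ = (1/2)(𝓘Ω, Ω) and F₂ = (1/2)(𝓘Ω, 𝓘Ω) − (1/2)(𝓘Ω, γ)² are first integrals of the Veselova system 𝓘Ω̇ = 𝓘Ω × Ω + λγ, γ̇ = γ × Ω, with λ = −(𝓘Ω × Ω, 𝓘⁻¹γ)/(𝓘⁻¹γ, γ). -/

import Mathlib

open Matrix

private lemma hasDerivAt_dot {f g : ℝ → Fin 3 → ℝ} {f' g' : Fin 3 → ℝ} {t : ℝ}
    (hf : HasDerivAt f f' t) (hg : HasDerivAt g g' t) :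
    HasDerivAt (fun s => f s ⬝ᵥ g s) (f' ⬝ᵥ g t + f t ⬝ᵥ g') t := by
  have h : ∀ i ∈ Finset.univ, HasDerivAt (fun s => f s i * g s i)
      (f' i * g t i + f t i * g' i) t :=
    fun i _ => (hasDerivAt_pi.mp hf i).mul (hasDerivAt_pi.mp hg i)
  simpa [dotProduct, Finset.sum_add_distrib] using HasDerivAt.fun_sum h

private lemma hasDerivAt_mulVec (A : Matrix (Fin 3) (Fin 3) ℝ) {f : ℝ → Fin 3 → ℝ}
    {f' : Fin 3 → ℝ} {t : ℝ} (hf : HasDerivAt f f' t) :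
    HasDerivAt (fun s => A.mulVec (f s)) (A.mulVec f') t := by
  rw [hasDerivAt_pi]
  intro i
  simp only [Matrix.mulVec, dotProduct]
  exact HasDerivAt.fun_sum fun j _ => (hasDerivAt_pi.mp hf j).const_mul (A i j)

private lemma symm_dot {𝓘 : Matrix (Fin 3) (Fin 3) ℝ} (hsym : 𝓘.IsSymm)
    (x y : Fin 3 → ℝ) : 𝓘.mulVec x ⬝ᵥ y = x ⬝ᵥ 𝓘.mulVec y := by
  rw [Matrix.dotProduct_mulVec, ← Matrix.mulVec_transpose, hsym.eq, dotProduct_comm]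

private lemma cross_dot_self' (a b : Fin 3 → ℝ) : crossProduct a b ⬝ᵥ a = 0 := by
  simp [crossProduct, dotProduct, Fin.sum_univ_three]; ring

private lemma cross_dot_self'' (a b : Fin 3 → ℝ) : crossProduct a b ⬝ᵥ b = 0 := by
  simp [crossProduct, dotProduct, Fin.sum_univ_three]; ring

private lemma cross_dot_cancel (a b c : Fin 3 → ℝ) :
    a ⬝ᵥ crossProduct c b = -(crossProduct a b ⬝ᵥ c) := by
  simp [crossProduct, dotProduct, Fin.sum_univ_three]; ring

/-- On the constraint set `(Ω,γ) = 0`, the energy `F₁ = ½(𝓘Ω,Ω)` and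
`F₂ = ½(𝓘Ω,𝓘Ω) - ½(𝓘Ω,γ)²` are first integrals of the Veselova system
`𝓘Ω̇ = 𝓘Ω × Ω + λγ`, `γ̇ = γ × Ω`. -/
theorem veselova_integrals_constrained (𝓘 : Matrix (Fin 3) (Fin 3) ℝ)
    (hsym : 𝓘.IsSymm) (hpd : 𝓘.PosDef)
    (Ω γ : ℝ → Fin 3 → ℝ) (hunit : ∀ t, γ t ⬝ᵥ γ t = 1)
    (hconstraint : ∀ t, Ω t ⬝ᵥ γ t = 0)
    (lam : ℝ → ℝ)
    (hlam : ∀ t, lam t =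
      -(crossProduct (𝓘.mulVec (Ω t)) (Ω t) ⬝ᵥ 𝓘⁻¹.mulVec (γ t)) /
        (𝓘⁻¹.mulVec (γ t) ⬝ᵥ γ t))
    (hΩ : ∀ t, HasDerivAt Ω
      (𝓘⁻¹.mulVec (crossProduct (𝓘.mulVec (Ω t)) (Ω t) + lam t • γ t)) t)
    (hγ : ∀ t, HasDerivAt γ (crossProduct (γ t) (Ω t)) t) :
    (∀ t, HasDerivAt (fun s => (1/2) * (𝓘.mulVec (Ω s) ⬝ᵥ Ω s)) 0 t) ∧
    (∀ t, HasDerivAt (fun s => (1/2) * (𝓘.mulVec (Ω s) ⬝ᵥ 𝓘.mulVec (Ω s)) -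
      (1/2) * (𝓘.mulVec (Ω s) ⬝ᵥ γ s) ^ 2) 0 t) := by
  have hdet : IsUnit 𝓘.det := isUnit_iff_ne_zero.mpr hpd.det_pos.ne'
  have hinv : ∀ x : Fin 3 → ℝ, 𝓘.mulVec (𝓘⁻¹.mulVec x) = x := by
    intro x
    rw [Matrix.mulVec_mulVec, Matrix.mul_nonsing_inv 𝓘 hdet, Matrix.one_mulVec]
  have hID : ∀ t, HasDerivAt (fun s => 𝓘.mulVec (Ω s))
      (crossProduct (𝓘.mulVec (Ω t)) (Ω t) + lam t • γ t) t := by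
    intro t
    have := hasDerivAt_mulVec 𝓘 (hΩ t)
    rwa [hinv] at this
  constructor
  · intro t
    set u := 𝓘.mulVec (Ω t) with hu
    set c := crossProduct u (Ω t) with hc
    have key := hasDerivAt_dot (hID t) (hΩ t)
    have h2 : (c + lam t • γ t) ⬝ᵥ Ω t = 0 := by
      rw [add_dotProduct, smul_dotProduct, hc, cross_dot_self'',
        dotProduct_comm, hconstraint]
      simp
    have hval : (c + lam t • γ t) ⬝ᵥ Ω t +
        u ⬝ᵥ 𝓘⁻¹.mulVec (c + lam t • γ t) = 0 := by
      have h1 : u ⬝ᵥ 𝓘⁻¹.mulVec (c + lam t • γ t)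
          = (c + lam t • γ t) ⬝ᵥ Ω t := by
        rw [hu, symm_dot hsym, hinv, dotProduct_comm]
      rw [h1, h2]; ring
    have := key.const_mul (1/2 : ℝ)
    rw [hval, mul_zero] at this
    exact this
  · intro t
    set u := 𝓘.mulVec (Ω t) with hu
    set c := crossProduct u (Ω t) with hc
    have d1 := hasDerivAt_dot (hID t) (hID t)
    have d2 := hasDerivAt_dot (hID t) (hγ t)
    have key := (d1.const_mul (1/2 : ℝ)).sub ((d2.pow 2).const_mul (1/2 : ℝ))
    have h1 : (c + lam t • γ t) ⬝ᵥ u = lam t * (γ t ⬝ᵥ u) := by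
      rw [add_dotProduct, hc, cross_dot_self', smul_dotProduct]
      simp
    have h2 : u ⬝ᵥ (c + lam t • γ t) = lam t * (γ t ⬝ᵥ u) := by
      rw [dotProduct_comm]; exact h1
    have h3 : (c + lam t • γ t) ⬝ᵥ γ t + u ⬝ᵥ crossProduct (γ t) (Ω t)
        = lam t := by
      rw [add_dotProduct, smul_dotProduct, hunit,
        cross_dot_cancel u (Ω t) (γ t), ← hc]
      simp only [smul_eq_mul, mul_one]
      ring
    have hval : (1/2 : ℝ) * ((c + lam t • γ t) ⬝ᵥ u + u ⬝ᵥ (c + lam t • γ t)) -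
        (1/2) * (((2:ℕ):ℝ) * (u ⬝ᵥ γ t) ^ (2-1) *
          ((c + lam t • γ t) ⬝ᵥ γ t + u ⬝ᵥ crossProduct (γ t) (Ω t))) = 0 := by
      rw [h1, h2, h3, dotProduct_comm]
      ring
    rw [hval] at key
    exact key
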